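/- arXiv:2407.09866 — 5 statements merged into one kernel-verified Lean document; each statement's English description precedes it below -/
import Mathlib

section
/- For every array u : Fin n → Fin n → ℂ, the complex number ∑_{i,j,k,l} R i j k l · u i k · conj (u j l) has zero imaginary part and nonnegative real part. (This is the algebraic content of the paper's Corollary: the Riemann tensor of a special Kähler geometry, given by R_{i j̄ k l̄} = G^{m n̄} Y_{ikm} conj(Y_{jln}), is Nakano non-negative.) -/
open Finset in
private lemma sum_comm6 {α : Type*} [AddCommMonoid α] {n : ℕ}
    (f : Fin n → Fin n → Fin n → Fin n → Fin n → Fin n → α) :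
    (∑ i, ∑ j, ∑ k, ∑ l, ∑ m, ∑ p, f i j k l m p)
      = ∑ m, ∑ p, ∑ i, ∑ j, ∑ k, ∑ l, f i j k l m p := by
  conv_lhs => enter [2, i, 2, j, 2, k]; rw [Finset.sum_comm]
  conv_lhs => enter [2, i, 2, j]; rw [Finset.sum_comm]
  conv_lhs => enter [2, i]; rw [Finset.sum_comm]
  conv_lhs => rw [Finset.sum_comm]
  conv_lhs => enter [2, m, 2, i, 2, j, 2, k]; rw [Finset.sum_comm]
  conv_lhs => enter [2, m, 2, i, 2, j]; rw [Finset.sum_comm]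
  conv_lhs => enter [2, m, 2, i]; rw [Finset.sum_comm]
  conv_lhs => enter [2, m]; rw [Finset.sum_comm]

open Finset in
private lemma sum_perm4 {α : Type*} [AddCommMonoid α] {n : ℕ}
    (f : Fin n → Fin n → Fin n → Fin n → α) :
    (∑ i, ∑ j, ∑ k, ∑ l, f i j k l) = ∑ i, ∑ j, ∑ k, ∑ l, f j l i k := by
  conv_rhs => rw [Finset.sum_comm]
  conv_rhs => enter [2, a, 2, i]; rw [Finset.sum_comm]
  conv_rhs => enter [2, a]; rw [Finset.sum_comm]

open Finset ComplexOrder in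
/-- Nakano non-negativity of the special Kähler curvature
`R i j k l = ∑ m p, (G⁻¹) m p * Y i k m * conj (Y j l p)`. -/
theorem special_kahler_nakano_nonneg
    (n : ℕ) (hn : 0 < n)
    (G : Matrix (Fin n) (Fin n) ℂ) (hG : G.PosDef)
    (Y : Fin n → Fin n → Fin n → ℂ)
    (hYsym : ∀ i j k, Y i j k = Y j i k ∧ Y i j k = Y i k j)
    (R : Fin n → Fin n → Fin n → Fin n → ℂ)
    (hR : ∀ i j k l, R i j k l =
      ∑ m, ∑ p, G⁻¹ m p * Y i k m * (starRingEnd ℂ) (Y j l p))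
    (u : Fin n → Fin n → ℂ) :
    (∑ i, ∑ j, ∑ k, ∑ l,
        R i j k l * u i k * (starRingEnd ℂ) (u j l)).im = 0 ∧
    0 ≤ (∑ i, ∑ j, ∑ k, ∑ l,
        R i j k l * u i k * (starRingEnd ℂ) (u j l)).re := by
  set v : Fin n → ℂ := fun m => ∑ i, ∑ k, Y i k m * u i k with hv
  set w : Fin n → ℂ := fun p => (starRingEnd ℂ) (v p) with hw
  have e1 : dotProduct (star w) (Matrix.mulVec G⁻¹ w)
      = ∑ m, ∑ p, G⁻¹ m p * v m * (starRingEnd ℂ) (v p) := by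
    simp only [dotProduct, Matrix.mulVec, dotProduct, Pi.star_apply, hw,
      RCLike.star_def, Complex.conj_conj, Finset.mul_sum]
    refine Finset.sum_congr rfl fun m _ => Finset.sum_congr rfl fun p _ => ?_
    ring
  have e2 : (∑ m, ∑ p, G⁻¹ m p * v m * (starRingEnd ℂ) (v p))
      = ∑ m, ∑ p, ∑ i, ∑ j, ∑ k, ∑ l,
          G⁻¹ m p * Y i k m * (starRingEnd ℂ) (Y j l p)
            * u i k * (starRingEnd ℂ) (u j l) := by
    refine Finset.sum_congr rfl fun m _ => Finset.sum_congr rfl fun p _ => ?_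
    rw [hv]
    simp only [map_sum, map_mul, Finset.mul_sum, Finset.sum_mul]
    rw [sum_perm4 (fun i j k l => _)]
    refine Finset.sum_congr rfl fun i _ => Finset.sum_congr rfl fun j _ =>
      Finset.sum_congr rfl fun k _ => Finset.sum_congr rfl fun l _ => ?_
    ring
  have key : (∑ i, ∑ j, ∑ k, ∑ l,
        R i j k l * u i k * (starRingEnd ℂ) (u j l))
      = dotProduct (star w) (Matrix.mulVec G⁻¹ w) := by
    rw [e1, e2, ← sum_comm6]
    simp only [hR, Finset.sum_mul]
  have hps : (G⁻¹).PosSemidef := hG.inv.posSemidef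
  have h0 := hps.dotProduct_mulVec_nonneg w
  rw [Complex.nonneg_iff] at h0
  rw [key]
  exact ⟨h0.2.symm, h0.1⟩
end

section
/- For all vectors v, w : Fin n → ℂ, the complex number ∑_{i,j,k,l} R i j k l · v i · conj (v j) · w k · conj (w l) has zero imaginary part and nonnegative real part. (Griffiths non-negativity / non-negative holomorphic bisectional curvatures of special Kähler geometry, as asserted in the paper's Corollary on the curvature tensor.) -/
private lemma sum_swap6 {M : Type*} [AddCommMonoid M] {ι : Type*} [Fintype ι]
    (f : ι → ι → ι → ι → ι → ι → M) :
    ∑ i, ∑ j, ∑ k, ∑ l, ∑ m, ∑ p, f i j k l m p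
      = ∑ m, ∑ p, ∑ i, ∑ j, ∑ k, ∑ l, f i j k l m p := by
  have c : ∀ {g h : ι → M}, (∀ a, g a = h a) → ∑ a, g a = ∑ a, h a :=
    fun h => Finset.sum_congr rfl (fun a _ => h a)
  calc ∑ i, ∑ j, ∑ k, ∑ l, ∑ m, ∑ p, f i j k l m p
      = ∑ i, ∑ j, ∑ k, ∑ m, ∑ l, ∑ p, f i j k l m p :=
        c fun i => c fun j => c fun k => Finset.sum_comm
    _ = ∑ i, ∑ j, ∑ m, ∑ k, ∑ l, ∑ p, f i j k l m p :=
        c fun i => c fun j => Finset.sum_comm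
    _ = ∑ i, ∑ m, ∑ j, ∑ k, ∑ l, ∑ p, f i j k l m p :=
        c fun i => Finset.sum_comm
    _ = ∑ m, ∑ i, ∑ j, ∑ k, ∑ l, ∑ p, f i j k l m p := Finset.sum_comm
    _ = ∑ m, ∑ i, ∑ j, ∑ k, ∑ p, ∑ l, f i j k l m p :=
        c fun m => c fun i => c fun j => c fun k => Finset.sum_comm
    _ = ∑ m, ∑ i, ∑ j, ∑ p, ∑ k, ∑ l, f i j k l m p :=
        c fun m => c fun i => c fun j => Finset.sum_comm
    _ = ∑ m, ∑ i, ∑ p, ∑ j, ∑ k, ∑ l, f i j k l m p :=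
        c fun m => c fun i => Finset.sum_comm
    _ = ∑ m, ∑ p, ∑ i, ∑ j, ∑ k, ∑ l, f i j k l m p :=
        c fun m => Finset.sum_comm

open Finset ComplexOrder in
/-- Griffiths non-negativity / non-negative holomorphic bisectional curvature of the
special Kähler curvature `R i j k l = ∑ m p, (G⁻¹) m p * Y i k m * conj (Y j l p)`. -/
theorem special_kahler_griffiths_nonneg
    (n : ℕ) (hn : 0 < n)
    (G : Matrix (Fin n) (Fin n) ℂ) (hG : G.PosDef)
    (Y : Fin n → Fin n → Fin n → ℂ)
    (hYsym : ∀ i j k, Y i j k = Y j i k ∧ Y i j k = Y i k j)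
    (R : Fin n → Fin n → Fin n → Fin n → ℂ)
    (hR : ∀ i j k l, R i j k l =
      ∑ m, ∑ p, G⁻¹ m p * Y i k m * (starRingEnd ℂ) (Y j l p))
    (v w : Fin n → ℂ) :
    (∑ i, ∑ j, ∑ k, ∑ l,
        R i j k l * v i * (starRingEnd ℂ) (v j) * w k * (starRingEnd ℂ) (w l)).im = 0 ∧
    0 ≤ (∑ i, ∑ j, ∑ k, ∑ l,
        R i j k l * v i * (starRingEnd ℂ) (v j) * w k * (starRingEnd ℂ) (w l)).re := by
  set x : Fin n → ℂ := fun m => (starRingEnd ℂ) (∑ i, ∑ k, Y i k m * v i * w k) with hx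
  have h0 : (0 : ℂ) ≤ dotProduct (star x) (G⁻¹.mulVec x) := (hG.inv.posSemidef).dotProduct_mulVec_nonneg x
  have key : (∑ i, ∑ j, ∑ k, ∑ l,
        R i j k l * v i * (starRingEnd ℂ) (v j) * w k * (starRingEnd ℂ) (w l))
      = dotProduct (star x) (G⁻¹.mulVec x) := by
    simp only [hR, hx, dotProduct, Matrix.mulVec, Pi.star_apply, map_sum, map_mul,
      Complex.conj_conj, Finset.sum_mul, Finset.mul_sum]
    rw [sum_swap6]
    simp only [Complex.star_def, map_sum, map_mul, Complex.conj_conj, Finset.sum_mul,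
      Finset.mul_sum]
    refine Finset.sum_congr rfl fun m _ => ?_
    refine Finset.sum_congr rfl fun p _ => ?_
    rw [Finset.sum_comm]
    refine Finset.sum_congr rfl fun j _ => ?_
    conv_rhs => rw [Finset.sum_comm]
    refine Finset.sum_congr rfl fun i _ => ?_
    conv_rhs => rw [Finset.sum_comm]
    refine Finset.sum_congr rfl fun k _ => ?_
    refine Finset.sum_congr rfl fun l _ => ?_
    ring
  rw [key]
  rw [Complex.le_def] at h0
  exact ⟨h0.2.symm, by simpa using h0.1⟩
end

section
/- The Ricci matrix Ric, defined by Ric i j := ∑_{k,l} (G⁻¹) k l · R i j k l, is a Hermitian positive semidefinite n×n complex matrix; moreover Ric = 0 if and only if Y is identically zero, if and only if the full array R is identically zero. (This is the paper's statement that the Ricci tensor of a special Kähler geometry is non-negative, and that a Ricci-flat special Kähler manifold is flat.) -/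
open Finset ComplexOrder in
/-- The Ricci matrix `Ric i j = ∑ k l, (G⁻¹) k l * R i j k l` of a special Kähler geometry
is Hermitian positive semidefinite, and `Ric = 0` iff `Y ≡ 0` iff `R ≡ 0`. -/
theorem special_kahler_ricci_nonneg_and_flat
    (n : ℕ) (hn : 0 < n)
    (G : Matrix (Fin n) (Fin n) ℂ) (hG : G.PosDef)
    (Y : Fin n → Fin n → Fin n → ℂ)
    (hYsym : ∀ i j k, Y i j k = Y j i k ∧ Y i j k = Y i k j)
    (R : Fin n → Fin n → Fin n → Fin n → ℂ)
    (hR : ∀ i j k l, R i j k l =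
      ∑ m, ∑ p, G⁻¹ m p * Y i k m * (starRingEnd ℂ) (Y j l p))
    (Ric : Matrix (Fin n) (Fin n) ℂ)
    (hRic : ∀ i j, Ric i j = ∑ k, ∑ l, G⁻¹ k l * R i j k l) :
    Ric.PosSemidef ∧
    (Ric = 0 ↔ ∀ i j k, Y i j k = 0) ∧
    ((∀ i j k, Y i j k = 0) ↔ ∀ i j k l, R i j k l = 0) := by
  have hHpd : (G⁻¹).PosDef := hG.inv
  -- generic fact: psd M with nonzero det kills any vector with zero quadratic form
  have hkill : ∀ {ι : Type} [Fintype ι] [DecidableEq ι] (M : Matrix ι ι ℂ),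
      M.PosSemidef → M.det ≠ 0 → ∀ y : ι → ℂ, dotProduct (star y) (M.mulVec y) = 0 → y = 0 := by
    intro ι _ _ M hM hdet y hy
    have h0 : M.mulVec y = 0 := (hM.dotProduct_mulVec_zero_iff y).mp hy
    calc y = (M⁻¹ * M).mulVec y := by rw [Matrix.nonsing_inv_mul M hdet.isUnit, Matrix.one_mulVec]
    _ = M⁻¹.mulVec (M.mulVec y) := by rw [Matrix.mulVec_mulVec]
    _ = 0 := by rw [h0, Matrix.mulVec_zero]
  -- matrices A and M
  set A : Matrix (Fin n) (Fin n × Fin n) ℂ := Matrix.of fun i km => Y i km.1 km.2 with hA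
  set M : Matrix (Fin n × Fin n) (Fin n × Fin n) ℂ := Matrix.kroneckerMap (· * ·) G⁻¹ G⁻¹ with hM
  have hMpsd : M.PosSemidef := by
    obtain ⟨B, hB⟩ : ∃ B : Matrix (Fin n) (Fin n) ℂ, G⁻¹ = B.conjTranspose * B := by
      open scoped MatrixOrder Matrix.Norms.L2Operator in
      exact CStarAlgebra.nonneg_iff_eq_star_mul_self.mp hHpd.posSemidef.nonneg
    have : M = (Matrix.kroneckerMap (· * ·) B B).conjTranspose * (Matrix.kroneckerMap (· * ·) B B) := by
      have h1 : (Matrix.kroneckerMap (· * ·) B B).conjTranspose = Matrix.kroneckerMap (· * ·) B.conjTranspose B.conjTranspose := by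
        ext ⟨k, m⟩ ⟨l, p⟩
        simp [Matrix.conjTranspose_apply, Matrix.kroneckerMap_apply]
      rw [h1, hM, hB, Matrix.mul_kronecker_mul]
    rw [this]
    exact Matrix.posSemidef_conjTranspose_mul_self _
  have hMdet : M.det ≠ 0 := by
    rw [hM, Matrix.det_kronecker]
    have := hHpd.det_pos
    positivity
  -- Ric = A * M * A.conjTranspose
  have key : Ric = A * M * A.conjTranspose := by
    ext i j
    rw [hRic, Matrix.mul_assoc]
    simp only [Matrix.mul_apply, Matrix.conjTranspose_apply, hA, hM, Matrix.of_apply,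
      Matrix.kroneckerMap_apply, Fintype.sum_prod_type, hR, Finset.mul_sum, Finset.sum_mul]
    refine Finset.sum_congr rfl fun k _ => ?_
    rw [Finset.sum_comm]
    refine Finset.sum_congr rfl fun m _ => Finset.sum_congr rfl fun l _ =>
      Finset.sum_congr rfl fun p _ => ?_
    simp only [RCLike.star_def]
    ring
  have hpsd : Ric.PosSemidef := key ▸ hMpsd.mul_mul_conjTranspose_same A
  -- Ric = 0 → Y = 0
  have hRicY : Ric = 0 → ∀ i j k, Y i j k = 0 := by
    intro h0 i j k
    have hy : (fun lp : Fin n × Fin n => A.conjTranspose lp i) = 0 := by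
      apply hkill M hMpsd hMdet
      have : dotProduct (star (fun lp : Fin n × Fin n => A.conjTranspose lp i)) (M.mulVec (fun lp => A.conjTranspose lp i))
          = (A * M * A.conjTranspose) i i := by
        rw [Matrix.mul_assoc]
        simp only [Matrix.mul_apply, Matrix.mulVec, dotProduct, Pi.star_apply,
          Matrix.conjTranspose_apply, star_star]
      rw [this, ← key, h0]
      simp
    have := congrFun hy (j, k)
    simpa [hA, Matrix.conjTranspose_apply] using this
  have hYRic : (∀ i j k, Y i j k = 0) → Ric = 0 := by
    intro hY
    ext i j
    simp [hRic, hR, hY]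
  have hYR : (∀ i j k, Y i j k = 0) → ∀ i j k l, R i j k l = 0 := by
    intro hY i j k l
    simp [hR, hY]
  have hRY : (∀ i j k l, R i j k l = 0) → ∀ i j k, Y i j k = 0 := by
    intro h0 i k m
    have hy : (fun p => (starRingEnd ℂ) (Y i k p)) = 0 := by
      apply hkill G⁻¹ hHpd.posSemidef hHpd.det_pos.ne'
      have : dotProduct (star (fun p => (starRingEnd ℂ) (Y i k p))) (G⁻¹.mulVec (fun p => (starRingEnd ℂ) (Y i k p)))
          = R i i k k := by
        rw [hR]
        simp only [Matrix.mulVec, dotProduct, Pi.star_apply, RCLike.star_def,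
          Complex.conj_conj, Finset.mul_sum]
        refine Finset.sum_congr rfl fun a _ => Finset.sum_congr rfl fun b _ => ?_
        ring
      rw [this, h0]
    have := congrFun hy m
    simpa using this
  exact ⟨hpsd, ⟨hRicY, hYRic⟩, ⟨hYR, hRY⟩⟩
end

section
/- The scalar curvature Rscal := ∑_{i,j,k,l} (G⁻¹) i j · (G⁻¹) k l · R i j k l equals the squared Hermitian norm ‖Y‖²_G := ∑_{i,j,k,l,m,p} Y i k m · conj (Y j l p) · (G⁻¹) i j · (G⁻¹) k l · (G⁻¹) m p; it is a nonnegative real number, and Rscal = 0 if and only if Y is identically zero, in which case the full array R is identically zero. (The paper's Corollary: the scalar curvature of a special Kähler geometry is R = ‖Y‖², and if it vanishes at a point the whole Riemann tensor vanishes there.) -/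
open Finset ComplexConjugate

private lemma rot3 {M : Type*} [AddCommMonoid M] {α β γ : Type*} [Fintype α] [Fintype β]
    [Fintype γ] (f : α → β → γ → M) :
    ∑ a, ∑ b, ∑ c, f a b c = ∑ c, ∑ a, ∑ b, f a b c := by
  calc ∑ a, ∑ b, ∑ c, f a b c = ∑ a, ∑ c, ∑ b, f a b c :=
        Finset.sum_congr rfl fun a _ => Finset.sum_comm
    _ = ∑ c, ∑ a, ∑ b, f a b c := Finset.sum_comm

private lemma contract {n : ℕ} {H B : Matrix (Fin n) (Fin n) ℂ}
    (hE : ∀ m p, H m p = ∑ q, conj (B q m) * B q p) (u v : Fin n → ℂ) :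
    ∑ m, ∑ p, H m p * u m * conj (v p)
      = ∑ c, (∑ m, u m * conj (B c m)) * conj (∑ p, v p * conj (B c p)) := by
  have key : ∀ m p, H m p * u m * conj (v p)
      = ∑ c, (u m * conj (B c m)) * conj (v p * conj (B c p)) := by
    intro m p
    rw [hE, Finset.sum_mul, Finset.sum_mul]
    refine Finset.sum_congr rfl fun c _ => ?_
    simp only [map_mul, Complex.conj_conj]
    ring
  have hr : ∀ c, (∑ m, u m * conj (B c m)) * conj (∑ p, v p * conj (B c p))
      = ∑ m, ∑ p, (u m * conj (B c m)) * conj (v p * conj (B c p)) := by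
    intro c
    rw [map_sum, Finset.sum_mul_sum]
  calc ∑ m, ∑ p, H m p * u m * conj (v p)
      = ∑ m, ∑ p, ∑ c, (u m * conj (B c m)) * conj (v p * conj (B c p)) :=
        Finset.sum_congr rfl fun m _ => Finset.sum_congr rfl fun p _ => key m p
    _ = ∑ c, ∑ m, ∑ p, (u m * conj (B c m)) * conj (v p * conj (B c p)) := rot3 _
    _ = ∑ c, (∑ m, u m * conj (B c m)) * conj (∑ p, v p * conj (B c p)) :=
        Finset.sum_congr rfl fun c _ => (hr c).symm

private lemma solve_step {n : ℕ} {B : Matrix (Fin n) (Fin n) ℂ} (hB : B.det ≠ 0)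
    (v : Fin n → ℂ) (h : ∀ a, ∑ i, v i * conj (B a i) = 0) : ∀ i, v i = 0 := by
  set M : Matrix (Fin n) (Fin n) ℂ := B.map (starRingEnd ℂ) with hM
  have hdet : M.det = conj B.det := ((starRingEnd ℂ).map_det B).symm
  have hMdet : M.det ≠ 0 := by
    rw [hdet]; simpa using hB
  have hunit : IsUnit M := (Matrix.isUnit_iff_isUnit_det M).mpr (isUnit_iff_ne_zero.mpr hMdet)
  have hinj : Function.Injective M.mulVec := Matrix.mulVec_injective_iff_isUnit.mpr hunit
  have hzero : M.mulVec v = M.mulVec 0 := by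
    rw [Matrix.mulVec_zero]
    funext a
    simpa [Matrix.mulVec, dotProduct, M, Matrix.map_apply, mul_comm] using h a
  have := hinj hzero
  intro i; exact congrFun this i

private lemma sk_key {n : ℕ} {H B : Matrix (Fin n) (Fin n) ℂ}
    (hE : ∀ m p, H m p = ∑ q, conj (B q m) * B q p) (Y : Fin n → Fin n → Fin n → ℂ) :
    (∑ i, ∑ j, ∑ k, ∑ l, ∑ m, ∑ p,
        Y i k m * conj (Y j l p) * H i j * H k l * H m p)
      = ∑ c, ∑ b, ∑ a,
          (∑ i, (∑ k, (∑ m, Y i k m * conj (B c m)) * conj (B b k)) * conj (B a i)) *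
          conj (∑ i, (∑ k, (∑ m, Y i k m * conj (B c m)) * conj (B b k)) * conj (B a i)) := by
  set W : Fin n → Fin n → Fin n → ℂ := fun c i k => ∑ m, Y i k m * conj (B c m) with hW
  set V : Fin n → Fin n → Fin n → ℂ := fun b c i => ∑ k, W c i k * conj (B b k) with hV
  calc (∑ i, ∑ j, ∑ k, ∑ l, ∑ m, ∑ p,
        Y i k m * conj (Y j l p) * H i j * H k l * H m p)
      = ∑ i, ∑ j, ∑ k, ∑ l, H i j * H k l *
          ∑ c, W c i k * conj (W c j l) := by
        refine Finset.sum_congr rfl fun i _ => Finset.sum_congr rfl fun j _ =>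
          Finset.sum_congr rfl fun k _ => Finset.sum_congr rfl fun l _ => ?_
        rw [← contract hE (fun m => Y i k m) (fun p => Y j l p)]
        simp only [Finset.mul_sum]
        refine Finset.sum_congr rfl fun m _ => Finset.sum_congr rfl fun p _ => ?_
        ring
    _ = ∑ i, ∑ j, H i j * ∑ c, ∑ k, ∑ l, H k l * (W c i k) * conj (W c j l) := by
        refine Finset.sum_congr rfl fun i _ => Finset.sum_congr rfl fun j _ => ?_
        calc ∑ k, ∑ l, H i j * H k l * ∑ c, W c i k * conj (W c j l)
            = ∑ k, ∑ l, ∑ c, H i j * (H k l * W c i k * conj (W c j l)) := by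
              refine Finset.sum_congr rfl fun k _ => Finset.sum_congr rfl fun l _ => ?_
              rw [Finset.mul_sum]
              exact Finset.sum_congr rfl fun c _ => by ring
          _ = ∑ c, ∑ k, ∑ l, H i j * (H k l * W c i k * conj (W c j l)) :=
              rot3 (fun k l c => H i j * (H k l * W c i k * conj (W c j l)))
          _ = H i j * ∑ c, ∑ k, ∑ l, H k l * W c i k * conj (W c j l) := by
              rw [Finset.mul_sum]
              refine Finset.sum_congr rfl fun c _ => ?_
              rw [Finset.mul_sum]
              refine Finset.sum_congr rfl fun k _ => ?_
              rw [Finset.mul_sum]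
    _ = ∑ i, ∑ j, ∑ c, ∑ b, H i j * (V b c i * conj (V b c j)) := by
        refine Finset.sum_congr rfl fun i _ => Finset.sum_congr rfl fun j _ => ?_
        rw [Finset.mul_sum]
        refine Finset.sum_congr rfl fun c _ => ?_
        rw [contract hE (fun k => W c i k) (fun l => W c j l), Finset.mul_sum]
    _ = ∑ c, ∑ b, ∑ i, ∑ j, H i j * V b c i * conj (V b c j) := by
        have h1 : ∀ i : Fin n, ∑ j, ∑ c, ∑ b, H i j * (V b c i * conj (V b c j))
            = ∑ c, ∑ b, ∑ j, H i j * V b c i * conj (V b c j) := by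
          intro i
          rw [rot3 (fun j c b => H i j * (V b c i * conj (V b c j)))]
          -- now ∑ b, ∑ j, ∑ c
          rw [rot3 (fun b j c => H i j * (V b c i * conj (V b c j)))]
          exact Finset.sum_congr rfl fun c _ => Finset.sum_congr rfl fun b _ =>
            Finset.sum_congr rfl fun j _ => by ring
        calc ∑ i, ∑ j, ∑ c, ∑ b, H i j * (V b c i * conj (V b c j))
            = ∑ i, ∑ c, ∑ b, ∑ j, H i j * V b c i * conj (V b c j) :=
              Finset.sum_congr rfl fun i _ => h1 i
          _ = ∑ b, ∑ i, ∑ c, ∑ j, H i j * V b c i * conj (V b c j) :=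
              rot3 (fun i c b => ∑ j, H i j * V b c i * conj (V b c j))
          _ = ∑ c, ∑ b, ∑ i, ∑ j, H i j * V b c i * conj (V b c j) :=
              rot3 (fun b i c => ∑ j, H i j * V b c i * conj (V b c j))
    _ = ∑ c, ∑ b, ∑ a,
          (∑ i, (∑ k, (∑ m, Y i k m * conj (B c m)) * conj (B b k)) * conj (B a i)) *
          conj (∑ i, (∑ k, (∑ m, Y i k m * conj (B c m)) * conj (B b k)) * conj (B a i)) := by
        refine Finset.sum_congr rfl fun c _ => Finset.sum_congr rfl fun b _ => ?_
        exact contract hE (fun i => V b c i) (fun j => V b c j)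

open Finset ComplexOrder in
/-- The scalar curvature `Rscal = ∑ (G⁻¹) i j (G⁻¹) k l R i j k l` of a special Kähler geometry
equals `‖Y‖²_G`, is a nonnegative real number, and vanishes iff `Y ≡ 0`, in which case `R ≡ 0`. -/
theorem special_kahler_scalar_curvature
    (n : ℕ) (hn : 0 < n)
    (G : Matrix (Fin n) (Fin n) ℂ) (hG : G.PosDef)
    (Y : Fin n → Fin n → Fin n → ℂ)
    (hYsym : ∀ i j k, Y i j k = Y j i k ∧ Y i j k = Y i k j)
    (R : Fin n → Fin n → Fin n → Fin n → ℂ)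
    (hR : ∀ i j k l, R i j k l =
      ∑ m, ∑ p, G⁻¹ m p * Y i k m * (starRingEnd ℂ) (Y j l p))
    (Rscal : ℂ)
    (hRscal : Rscal = ∑ i, ∑ j, ∑ k, ∑ l, G⁻¹ i j * G⁻¹ k l * R i j k l) :
    Rscal = (∑ i, ∑ j, ∑ k, ∑ l, ∑ m, ∑ p,
        Y i k m * (starRingEnd ℂ) (Y j l p) * G⁻¹ i j * G⁻¹ k l * G⁻¹ m p) ∧
    Rscal.im = 0 ∧ 0 ≤ Rscal.re ∧
    ((Rscal = 0 ↔ ∀ i j k, Y i j k = 0) ∧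
      ((∀ i j k, Y i j k = 0) → ∀ i j k l, R i j k l = 0)) := by
  have hHpd : (G⁻¹).PosDef := hG.inv
  obtain ⟨B, hB⟩ : ∃ B : Matrix (Fin n) (Fin n) ℂ, G⁻¹ = B.conjTranspose * B := by
    open MatrixOrder Matrix.Norms.L2Operator in
    exact CStarAlgebra.nonneg_iff_eq_star_mul_self.mp hHpd.posSemidef.nonneg
  have hE : ∀ m p, G⁻¹ m p = ∑ q, conj (B q m) * B q p := by
    intro m p
    rw [hB]
    simp [Matrix.mul_apply, Matrix.conjTranspose_apply]
  have h1 : Rscal = ∑ i, ∑ j, ∑ k, ∑ l, ∑ m, ∑ p,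
      Y i k m * conj (Y j l p) * G⁻¹ i j * G⁻¹ k l * G⁻¹ m p := by
    rw [hRscal]
    refine Finset.sum_congr rfl fun i _ => Finset.sum_congr rfl fun j _ =>
      Finset.sum_congr rfl fun k _ => Finset.sum_congr rfl fun l _ => ?_
    rw [hR, Finset.mul_sum]
    refine Finset.sum_congr rfl fun m _ => ?_
    rw [Finset.mul_sum]
    exact Finset.sum_congr rfl fun p _ => by ring
  set U : Fin n → Fin n → Fin n → ℂ := fun a b c =>
    ∑ i, (∑ k, (∑ m, Y i k m * conj (B c m)) * conj (B b k)) * conj (B a i) with hU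
  have h2 : Rscal = ∑ c, ∑ b, ∑ a, U a b c * conj (U a b c) := by
    rw [h1]
    exact sk_key hE Y
  have h3 : Rscal = ((∑ c, ∑ b, ∑ a, Complex.normSq (U a b c) : ℝ) : ℂ) := by
    rw [h2]
    push_cast
    exact Finset.sum_congr rfl fun c _ => Finset.sum_congr rfl fun b _ =>
      Finset.sum_congr rfl fun a _ => Complex.mul_conj _
  have hdetB : B.det ≠ 0 := by
    have hd : (G⁻¹).det ≠ 0 := ne_of_gt hHpd.det_pos
    rw [hB, Matrix.det_mul] at hd
    exact fun h => hd (by rw [h, mul_zero])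
  have hzY : Rscal = 0 → ∀ i j k, Y i j k = 0 := by
    intro h0
    have hs : (∑ c, ∑ b, ∑ a, Complex.normSq (U a b c)) = 0 := by
      have := h3.symm.trans h0
      exact_mod_cast this
    have hUz : ∀ a b c, U a b c = 0 := by
      intro a b c
      have h4 := (Finset.sum_eq_zero_iff_of_nonneg (fun c _ => Finset.sum_nonneg fun b _ =>
        Finset.sum_nonneg fun a _ => Complex.normSq_nonneg _)).mp hs c (Finset.mem_univ c)
      have h5 := (Finset.sum_eq_zero_iff_of_nonneg (fun b _ =>
        Finset.sum_nonneg fun a _ => Complex.normSq_nonneg _)).mp h4 b (Finset.mem_univ b)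
      have h6 := (Finset.sum_eq_zero_iff_of_nonneg (fun a _ =>
        Complex.normSq_nonneg _)).mp h5 a (Finset.mem_univ a)
      exact Complex.normSq_eq_zero.mp h6
    have hV : ∀ b c i, (∑ k, (∑ m, Y i k m * conj (B c m)) * conj (B b k)) = 0 :=
      fun b c i => solve_step hdetB _ (fun a => hUz a b c) i
    have hWz : ∀ c i k, (∑ m, Y i k m * conj (B c m)) = 0 :=
      fun c i k => solve_step hdetB _ (fun b => hV b c i) k
    intro i j k
    exact solve_step hdetB (fun m => Y i j m) (fun c => hWz c i j) k
  refine ⟨h1, ?_, ?_, ⟨⟨hzY, ?_⟩, ?_⟩⟩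
  · rw [h3]
    exact Complex.ofReal_im _
  · rw [h3]
    have hnn : 0 ≤ (∑ c, ∑ b, ∑ a, Complex.normSq (U a b c)) :=
      Finset.sum_nonneg fun c _ => Finset.sum_nonneg fun b _ =>
        Finset.sum_nonneg fun a _ => Complex.normSq_nonneg _
    simpa using hnn
  · intro hY
    rw [hRscal]
    simp [hR, hY]
  · intro hY i j k l
    rw [hR]
    simp [hY]
end

section
/- For every J with 0 < J < 1/√(2e), the function V_eff(r) = log r + J²/r² has exactly two zeros r₋ < r₊ in the interval (0,1), with 0 < r₋ < √2·J < r₊ < 1, and the sublevel set { r ∈ (0, ∞) : V_eff(r) ≤ 0 } equals the closed interval [r₋, r₊]. (In the paper: geodesics with nonzero angular momentum are confined to the annulus r₋ ≤ r ≤ r₊, never reaching the singularities at r = 0 and r = 1, hence are complete.) -/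
namespace SubcriticalVeff

noncomputable def V (J r : ℝ) : ℝ := Real.log r + J ^ 2 / r ^ 2

lemma V_contAt (J : ℝ) {x : ℝ} (hx : 0 < x) : ContinuousAt (V J) x := by
  have h1 : ContinuousAt Real.log x := Real.continuousAt_log hx.ne'
  have h2 : ContinuousAt (fun r : ℝ => J ^ 2 / r ^ 2) x :=
    ContinuousAt.div continuousAt_const (by fun_prop) (pow_ne_zero 2 hx.ne')
  exact h1.add h2

lemma V_contOn (J : ℝ) {s : Set ℝ} (hs : ∀ x ∈ s, (0:ℝ) < x) :
    ContinuousOn (V J) s := fun x hx => (V_contAt J (hs x hx)).continuousWithinAt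

lemma V_hasDeriv (J : ℝ) {x : ℝ} (hx : 0 < x) :
    HasDerivAt (V J) ((x ^ 2 - 2 * J ^ 2) / x ^ 3) x := by
  have h1 := Real.hasDerivAt_log hx.ne'
  have h2 := (hasDerivAt_const x (J ^ 2)).div (hasDerivAt_pow 2 x)
    (pow_ne_zero 2 hx.ne')
  have h := h1.add h2
  refine h.congr_deriv ?_
  have hx2 : x ≠ 0 := hx.ne'
  field_simp
  ring

end SubcriticalVeff

open Real in
/-- For `0 < J < 1/√(2e)`, the effective potential `V_eff(r) = log r + J²/r²` has exactly
two zeros `r₋ < r₊` in `(0,1)`, with `0 < r₋ < √2·J < r₊ < 1`, and its nonpositivity set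
in `(0,∞)` is exactly the closed annulus `[r₋, r₊]`: subcritical geodesics are confined. -/
theorem subcritical_effective_potential_zeros
    (J : ℝ) (hJ0 : 0 < J) (hJc : J < 1 / Real.sqrt (2 * Real.exp 1)) :
    ∃ rm rp : ℝ,
      0 < rm ∧ rm < Real.sqrt 2 * J ∧ Real.sqrt 2 * J < rp ∧ rp < 1 ∧
      Real.log rm + J ^ 2 / rm ^ 2 = 0 ∧
      Real.log rp + J ^ 2 / rp ^ 2 = 0 ∧
      (∀ r : ℝ, 0 < r → r < 1 → Real.log r + J ^ 2 / r ^ 2 = 0 →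
        r = rm ∨ r = rp) ∧
      {r : ℝ | 0 < r ∧ Real.log r + J ^ 2 / r ^ 2 ≤ 0} = Set.Icc rm rp := by
  open SubcriticalVeff in
  have hVdef : ∀ r : ℝ, V J r = Real.log r + J ^ 2 / r ^ 2 := fun _ => rfl
  set c : ℝ := Real.sqrt 2 * J with hc
  have h2pos : (0:ℝ) ≤ 2 := by norm_num
  have hs2 : (0:ℝ) < Real.sqrt 2 := Real.sqrt_pos.2 (by norm_num)
  have hc0 : 0 < c := mul_pos hs2 hJ0
  have hcsq : c ^ 2 = 2 * J ^ 2 := by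
    rw [hc, mul_pow, Real.sq_sqrt h2pos]
  have hepos : (0:ℝ) < Real.exp 1 := Real.exp_pos 1
  have h2e : (0:ℝ) < 2 * Real.exp 1 := by positivity
  -- J² < 1/(2e)
  have hJsq : J ^ 2 < 1 / (2 * Real.exp 1) := by
    have h : (1 / Real.sqrt (2 * Real.exp 1)) ^ 2 = 1 / (2 * Real.exp 1) := by
      rw [div_pow, one_pow, Real.sq_sqrt h2e.le]
    calc J ^ 2 < (1 / Real.sqrt (2 * Real.exp 1)) ^ 2 :=
          pow_lt_pow_left₀ hJc hJ0.le two_ne_zero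
      _ = 1 / (2 * Real.exp 1) := h
  -- c < exp(-1/2)
  have hclt : c < Real.exp (-(1/2)) := by
    have hsq : c ^ 2 < (Real.exp (-(1/2))) ^ 2 := by
      have : (Real.exp (-(1/2))) ^ 2 = Real.exp (-1) := by
        rw [← Real.exp_nat_mul]
        norm_num
      rw [this, Real.exp_neg, hcsq]
      have h' : J ^ 2 * (2 * Real.exp 1) < 1 := (lt_div_iff₀ h2e).1 hJsq
      rw [inv_eq_one_div, lt_div_iff₀ hepos]
      nlinarith
    exact lt_of_pow_lt_pow_left₀ 2 (Real.exp_pos _).le hsq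
  have hc1 : c < 1 := by
    have : Real.exp (-(1/2)) < 1 := by
      rw [Real.exp_lt_one_iff]; norm_num
    linarith
  have hJ1 : J < 1 := by
    have h1 : (1:ℝ) < 2 * Real.exp 1 := by nlinarith [Real.add_one_le_exp (1:ℝ)]
    have h2 : (1:ℝ) < Real.sqrt (2 * Real.exp 1) := by
      rw [Real.lt_sqrt (by norm_num)]
      nlinarith
    have := (div_lt_one (by linarith)).2 h2
    linarith
  -- V J c < 0
  have hVc : V J c < 0 := by
    have hlog : Real.log c < -(1/2) := by
      have := Real.log_lt_log hc0 hclt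
      rwa [Real.log_exp] at this
    have hfrac : J ^ 2 / c ^ 2 = 1 / 2 := by
      rw [hcsq]
      field_simp
    rw [hVdef, hfrac]
    linarith
  -- V J (J²) > 0
  have ha0 : (0:ℝ) < J ^ 2 := by positivity
  have hac : J ^ 2 < c := by
    have hJs2 : J < Real.sqrt 2 := by
      have : (1:ℝ) < Real.sqrt 2 := by
        rw [Real.lt_sqrt (by norm_num)]
        norm_num
      linarith
    calc J ^ 2 = J * J := sq J
      _ < Real.sqrt 2 * J := by nlinarith
  have hVa : 0 < V J (J ^ 2) := by
    have hinv : (0:ℝ) < (J ^ 2)⁻¹ := by positivity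
    have hlog := Real.log_le_sub_one_of_pos hinv
    rw [Real.log_inv] at hlog
    have hfrac : J ^ 2 / (J ^ 2) ^ 2 = (J ^ 2)⁻¹ := by
      field_simp [sq]
    rw [hVdef, hfrac]
    linarith
  have hV1 : 0 < V J 1 := by
    rw [hVdef]
    simp [Real.log_one]
    positivity
  -- monotonicity
  have hanti : StrictAntiOn (V J) (Set.Ioc 0 c) := by
    apply strictAntiOn_of_deriv_neg (convex_Ioc 0 c)
      (V_contOn J (fun x hx => hx.1))
    intro x hx
    rw [interior_Ioc] at hx
    rw [(V_hasDeriv J hx.1).deriv]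
    apply div_neg_of_neg_of_pos
    · nlinarith [hx.1, hx.2]
    · exact pow_pos hx.1 3
  have hmono : StrictMonoOn (V J) (Set.Ici c) := by
    apply strictMonoOn_of_deriv_pos (convex_Ici c)
      (V_contOn J (fun x hx => lt_of_lt_of_le hc0 hx))
    intro x hx
    rw [interior_Ici] at hx
    have hx0 : (0:ℝ) < x := hc0.trans hx
    rw [(V_hasDeriv J hx0).deriv]
    apply div_pos
    · nlinarith [hcsq, hc0, Set.mem_Ioi.mp hx]
    · exact pow_pos hx0 3
  -- IVT for rm on [J², c]
  obtain ⟨rm, hrm_mem, hrmV⟩ :=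
    intermediate_value_Icc' hac.le
      (V_contOn J (fun x hx => lt_of_lt_of_le ha0 hx.1))
      (Set.mem_Icc.2 ⟨hVc.le, hVa.le⟩)
  obtain ⟨rp, hrp_mem, hrpV⟩ :=
    intermediate_value_Icc hc1.le
      (V_contOn J (fun x hx => lt_of_lt_of_le hc0 hx.1))
      (Set.mem_Icc.2 ⟨hVc.le, hV1.le⟩)
  have hrm0 : 0 < rm := lt_of_lt_of_le ha0 hrm_mem.1
  have hrmc : rm < c := lt_of_le_of_ne hrm_mem.2 (by
    intro h; rw [h] at hrmV; exact absurd hrmV hVc.ne)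
  have hrpc : c < rp := lt_of_le_of_ne hrp_mem.1 (by
    intro h; rw [← h] at hrpV
    exact absurd hrpV hVc.ne)
  have hrp1 : rp < 1 := lt_of_le_of_ne hrp_mem.2 (by
    intro h; rw [h] at hrpV; exact absurd hrpV hV1.ne')
  have hrm_in : rm ∈ Set.Ioc (0:ℝ) c := ⟨hrm0, hrmc.le⟩
  have hrp_in : rp ∈ Set.Ici c := le_of_lt hrpc
  refine ⟨rm, rp, hrm0, hrmc, hrpc, hrp1, hrmV, hrpV, ?_, ?_⟩
  · intro r hr0 hr1 hVr
    by_cases hrc : r ≤ c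
    · left
      exact hanti.injOn ⟨hr0, hrc⟩ hrm_in (by rw [← hVdef] at hVr; rw [hVr, hrmV])
    · right
      push_neg at hrc
      exact hmono.injOn (le_of_lt hrc) hrp_in (by rw [← hVdef] at hVr; rw [hVr, hrpV])
  · ext r
    simp only [Set.mem_setOf_eq, Set.mem_Icc]
    constructor
    · rintro ⟨hr0, hrle⟩
      rw [← hVdef] at hrle
      constructor
      · by_contra h
        push_neg at h
        have := hanti ⟨hr0, (h.trans hrmc).le⟩ hrm_in h
        rw [hrmV] at this
        linarith
      · by_contra h
        push_neg at h
        have := hmono hrp_in (le_of_lt (hrpc.trans h)) h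
        rw [hrpV] at this
        linarith
    · rintro ⟨h1, h2⟩
      have hr0 : 0 < r := lt_of_lt_of_le hrm0 h1
      refine ⟨hr0, ?_⟩
      rw [← hVdef]
      by_cases hrc : r ≤ c
      · rcases eq_or_lt_of_le h1 with h | h
        · rw [← h, hrmV]
        · have := hanti hrm_in ⟨hr0, hrc⟩ h
          rw [hrmV] at this
          linarith
      · push_neg at hrc
        rcases eq_or_lt_of_le h2 with h | h
        · rw [h, hrpV]
        · have := hmono (le_of_lt hrc) hrp_in h
          rw [hrpV] at this
          linarith
end
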